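/- Let I be a set and let Q be a non-empty subset of l_∞(I) that is injective as a metric space with the induced metric. Then there exist subsets L, U of I and, for each i ∈ L, a 1-Lipschitz function r̲_i : l_∞(I∖{i}) → ℝ, and for each i ∈ U, a 1-Lipschitz function r̄_i : l_∞(I∖{i}) → ℝ, with r̲_i(y) ≤ r̄_i(y) for all y whenever i ∈ L ∩ U, such that Q = { x ∈ l_∞(I) : r̲_i(π̂_i(x)) ≤ x_i for all i ∈ L, and x_i ≤ r̄_i(π̂_i(x)) for all i ∈ U }. -/

import Mathlib

set_option synthInstance.maxHeartbeats 1000000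
set_option maxHeartbeats 2000000


universe u v w

/-- A metric space `X` is injective if for every pair of metric spaces `A`, `B`, every
isometric embedding `ι : A → B` and every `1`-Lipschitz map `f : A → X`, there is a
`1`-Lipschitz map `g : B → X` with `g ∘ ι = f`. -/
def IsInjectiveMetricSpace (X : Type u) [MetricSpace X] : Prop :=
  ∀ ⦃A : Type v⦄ ⦃B : Type w⦄ [MetricSpace A] [MetricSpace B],
    ∀ ι : A → B, Isometry ι → ∀ f : A → X, LipschitzWith 1 f →
      ∃ g : B → X, LipschitzWith 1 g ∧ ∀ a, g (ι a) = f a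

/-- The map `l_∞(I) → l_∞(I \ {i})` dropping the `i`-th coordinate. -/
noncomputable def dropCoord {I : Type u} (i : I) (x : lp (fun _ : I => ℝ) ⊤) :
    lp (fun _ : {j : I // j ≠ i} => ℝ) ⊤ :=
  ⟨fun j => x j.1, memℓp_infty ⟨‖x‖, by
    rintro s ⟨j, rfl⟩
    exact lp.norm_apply_le_norm ENNReal.top_ne_zero x j.1⟩⟩

namespace InjSub
variable {I : Type u}


-- retraction
lemma exists_retraction (Q : Set (lp (fun _ : I => ℝ) ⊤))
    (hinj : IsInjectiveMetricSpace.{u, u, u} Q) :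
    ∃ ρ : lp (fun _ : I => ℝ) ⊤ → lp (fun _ : I => ℝ) ⊤,
      (∀ x, ρ x ∈ Q) ∧ (∀ x, ∀ q ∈ Q, dist (ρ x) q ≤ dist x q) ∧ (∀ q ∈ Q, ρ q = q) := by
  obtain ⟨g, hg, hg2⟩ := hinj (Subtype.val : Q → lp (fun _ : I => ℝ) ⊤)
    isometry_subtype_coe id (LipschitzWith.id)
  refine ⟨fun x => (g x : lp (fun _ : I => ℝ) ⊤), fun x => (g x).2, ?_, ?_⟩
  · intro x q hq
    have h1 : dist (g x) (g q) ≤ 1 * dist x q := hg.dist_le_mul x q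
    have h2 : g q = ⟨q, hq⟩ := hg2 ⟨q, hq⟩
    rw [h2] at h1
    simpa [Subtype.dist_eq] using h1
  · intro q hq
    have := hg2 ⟨q, hq⟩
    simpa using congrArg Subtype.val this

end InjSub

namespace InjSub

variable {I : Type u} (Q : Set (lp (fun _ : I => ℝ) ⊤))

noncomputable def loSet (i : I) (y : lp (fun _ : {j : I // j ≠ i} => ℝ) ⊤) : Set ℝ :=
  (fun q => q i + dist y (dropCoord i q)) '' Q

noncomputable def hiSet (i : I) (y : lp (fun _ : {j : I // j ≠ i} => ℝ) ⊤) : Set ℝ :=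
  (fun q => q i - dist y (dropCoord i q)) '' Q

def Ldef : Set I := {i | ∀ y, BddBelow (loSet Q i y)}
def Udef : Set I := {i | ∀ y, BddAbove (hiSet Q i y)}

noncomputable def rlo (i : I) (y : lp (fun _ : {j : I // j ≠ i} => ℝ) ⊤) : ℝ :=
  sInf (loSet Q i y)

noncomputable def rhi (i : I) (y : lp (fun _ : {j : I // j ≠ i} => ℝ) ⊤) : ℝ :=
  sSup (hiSet Q i y)

variable {Q}

lemma loSet_nonempty (hQ : Q.Nonempty) (i : I) (y : lp (fun _ : {j : I // j ≠ i} => ℝ) ⊤) :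
    (loSet Q i y).Nonempty := hQ.image _

lemma hiSet_nonempty (hQ : Q.Nonempty) (i : I) (y : lp (fun _ : {j : I // j ≠ i} => ℝ) ⊤) :
    (hiSet Q i y).Nonempty := hQ.image _

lemma bddBelow_transfer {i : I} {y y' : lp (fun _ : {j : I // j ≠ i} => ℝ) ⊤}
    (h : BddBelow (loSet Q i y)) : BddBelow (loSet Q i y') := by
  obtain ⟨c, hc⟩ := h
  refine ⟨c - dist y y', ?_⟩
  rintro v ⟨q, hq, rfl⟩
  have h1 : c ≤ q i + dist y (dropCoord i q) := hc ⟨q, hq, rfl⟩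
  have h2 : dist y (dropCoord i q) ≤ dist y y' + dist y' (dropCoord i q) := dist_triangle _ _ _
  dsimp only
  linarith

lemma bddAbove_transfer {i : I} {y y' : lp (fun _ : {j : I // j ≠ i} => ℝ) ⊤}
    (h : BddAbove (hiSet Q i y)) : BddAbove (hiSet Q i y') := by
  obtain ⟨c, hc⟩ := h
  refine ⟨c + dist y y', ?_⟩
  rintro v ⟨q, hq, rfl⟩
  have h1 : q i - dist y (dropCoord i q) ≤ c := hc ⟨q, hq, rfl⟩
  have h2 : dist y (dropCoord i q) ≤ dist y y' + dist y' (dropCoord i q) := dist_triangle _ _ _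
  dsimp only
  linarith

lemma rlo_le_add (hQ : Q.Nonempty) {i : I} (hi : i ∈ Ldef Q) (y : _) {q} (hq : q ∈ Q) :
    rlo Q i y ≤ q i + dist y (dropCoord i q) :=
  csInf_le (hi y) ⟨q, hq, rfl⟩

lemma sub_le_rhi (hQ : Q.Nonempty) {i : I} (hi : i ∈ Udef Q) (y : _) {q} (hq : q ∈ Q) :
    q i - dist y (dropCoord i q) ≤ rhi Q i y :=
  le_csSup (hi y) ⟨q, hq, rfl⟩

lemma rlo_lipschitz (hQ : Q.Nonempty) {i : I} (hi : i ∈ Ldef Q) :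
    LipschitzWith 1 (rlo Q i) := by
  have key : ∀ y y', rlo Q i y ≤ rlo Q i y' + dist y y' := by
    intro y y'
    rw [← sub_le_iff_le_add]
    refine le_csInf (loSet_nonempty hQ i y') ?_
    rintro v ⟨q, hq, rfl⟩
    have h1 := rlo_le_add hQ hi y hq
    have h2 : dist y (dropCoord i q) ≤ dist y y' + dist y' (dropCoord i q) := dist_triangle _ _ _
    dsimp only
    linarith
  refine LipschitzWith.of_dist_le_mul fun y y' => ?_
  rw [NNReal.coe_one, one_mul, Real.dist_eq, abs_sub_le_iff]
  have hd : dist y y' = dist y' y := dist_comm _ _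
  constructor
  · have := key y y'
    linarith
  · have := key y' y
    linarith

lemma rhi_lipschitz (hQ : Q.Nonempty) {i : I} (hi : i ∈ Udef Q) :
    LipschitzWith 1 (rhi Q i) := by
  have key : ∀ y y', rhi Q i y ≤ rhi Q i y' + dist y y' := by
    intro y y'
    refine csSup_le (hiSet_nonempty hQ i y) ?_
    rintro v ⟨q, hq, rfl⟩
    have h1 := sub_le_rhi hQ hi y' hq
    have h2 : dist y' (dropCoord i q) ≤ dist y' y + dist y (dropCoord i q) := dist_triangle _ _ _
    have hd : dist y' y = dist y y' := dist_comm _ _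
    dsimp only
    linarith
  refine LipschitzWith.of_dist_le_mul fun y y' => ?_
  rw [NNReal.coe_one, one_mul, Real.dist_eq, abs_sub_le_iff]
  have hd : dist y y' = dist y' y := dist_comm _ _
  constructor
  · have := key y y'
    linarith
  · have := key y' y
    linarith

-- witnesses
lemma lo_witness (hQ : Q.Nonempty) {i : I} (hi : i ∈ Ldef Q) {y : _} {c : ℝ}
    (h : rlo Q i y < c) : ∃ q ∈ Q, q i + dist y (dropCoord i q) < c := by
  obtain ⟨v, ⟨q, hq, rfl⟩, hv⟩ := exists_lt_of_csInf_lt (loSet_nonempty hQ i y) h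
  exact ⟨q, hq, hv⟩

lemma hi_witness (hQ : Q.Nonempty) {i : I} (hi : i ∈ Udef Q) {y : _} {c : ℝ}
    (h : c < rhi Q i y) : ∃ q ∈ Q, c < q i - dist y (dropCoord i q) := by
  obtain ⟨v, ⟨q, hq, rfl⟩, hv⟩ := exists_lt_of_lt_csSup (hiSet_nonempty hQ i y) h
  exact ⟨q, hq, hv⟩

lemma lo_witness_of_not_mem {i : I} (hi : i ∉ Ldef Q) (y : _) (c : ℝ) :
    ∃ q ∈ Q, q i + dist y (dropCoord i q) < c := by
  have : ¬ BddBelow (loSet Q i y) := by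
    intro hb
    exact hi fun y' => bddBelow_transfer hb
  obtain ⟨v, hv, hvc⟩ := not_bddBelow_iff.1 this c
  obtain ⟨q, hq, rfl⟩ := hv
  exact ⟨q, hq, hvc⟩

lemma hi_witness_of_not_mem {i : I} (hi : i ∉ Udef Q) (y : _) (c : ℝ) :
    ∃ q ∈ Q, c < q i - dist y (dropCoord i q) := by
  have : ¬ BddAbove (hiSet Q i y) := by
    intro hb
    exact hi fun y' => bddAbove_transfer hb
  obtain ⟨v, hv, hvc⟩ := not_bddAbove_iff.1 this c
  obtain ⟨q, hq, rfl⟩ := hv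
  exact ⟨q, hq, hvc⟩

end InjSub

namespace InjSub
variable {I : Type u}

lemma dropCoord_sub (i : I) (x y : lp (fun _ : I => ℝ) ⊤) :
    dropCoord i (x - y) = dropCoord i x - dropCoord i y := by
  ext j
  simp [dropCoord, lp.coeFn_sub, Pi.sub_apply]
  rfl

lemma abs_coord_le_dist (x y : lp (fun _ : I => ℝ) ⊤) (i : I) : |x i - y i| ≤ dist x y := by
  rw [dist_eq_norm]
  have := lp.norm_apply_le_norm (ENNReal.top_ne_zero) (x - y) i
  simpa [lp.coeFn_sub, Pi.sub_apply, Real.norm_eq_abs] using this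

lemma dist_dropCoord_le (i : I) (x y : lp (fun _ : I => ℝ) ⊤) :
    dist (dropCoord i x) (dropCoord i y) ≤ dist x y := by
  rw [dist_eq_norm, dist_eq_norm, ← dropCoord_sub]
  refine lp.norm_le_of_forall_le (norm_nonneg _) fun j => ?_
  exact lp.norm_apply_le_norm ENNReal.top_ne_zero (x - y) j.1

lemma dist_le_max (i : I) (x y : lp (fun _ : I => ℝ) ⊤) :
    dist x y ≤ max |x i - y i| (dist (dropCoord i x) (dropCoord i y)) := by
  rw [dist_eq_norm]
  refine lp.norm_le_of_forall_le (le_max_iff.2 (Or.inl (abs_nonneg _))) fun j => ?_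
  rcases eq_or_ne j i with rfl | hj
  · exact le_max_of_le_left (by simp [lp.coeFn_sub, Pi.sub_apply, Real.norm_eq_abs])
  · refine le_max_of_le_right ?_
    rw [dist_eq_norm, ← dropCoord_sub]
    have := lp.norm_apply_le_norm (ENNReal.top_ne_zero) (dropCoord i (x - y)) ⟨j, hj⟩
    simpa [dropCoord, lp.coeFn_sub, Pi.sub_apply, Real.norm_eq_abs] using this

lemma dist_le_of_coords {x y : lp (fun _ : I => ℝ) ⊤} {K : ℝ} (hK : 0 ≤ K)
    (h : ∀ i, |x i - y i| ≤ K) : dist x y ≤ K := by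
  rw [dist_eq_norm]
  refine lp.norm_le_of_forall_le hK fun i => ?_
  simpa [lp.coeFn_sub, Pi.sub_apply, Real.norm_eq_abs] using h i

theorem core {Q : Set (lp (fun _ : I => ℝ) ⊤)}
    (ρ : lp (fun _ : I => ℝ) ⊤ → lp (fun _ : I => ℝ) ⊤)
    (hρQ : ∀ x, ρ x ∈ Q) (hρd : ∀ x, ∀ q ∈ Q, dist (ρ x) q ≤ dist x q)
    (x : lp (fun _ : I => ℝ) ⊤)
    (H : ∀ i : I, ∃ δ : ℝ, 0 ≤ δ ∧
      (∀ ε > (0:ℝ),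
        (∃ q ∈ Q, q i + dist (dropCoord i x) (dropCoord i q) < x i + δ + ε) ∧
        (∃ q ∈ Q, x i - δ - ε < q i - dist (dropCoord i x) (dropCoord i q))) ∧
      (0 < δ →
        (∀ q ∈ Q, x i + δ ≤ q i + dist (dropCoord i x) (dropCoord i q)) ∧
        (∀ q ∈ Q, q i - dist (dropCoord i x) (dropCoord i q) ≤ x i - δ))) :
    x ∈ Q := by
  set z := ρ x with hz
  have hzQ : z ∈ Q := hρQ x
  have hkey : ∀ q ∈ Q, dist z q ≤ dist x q := hρd x
  -- main estimate
  have main : ∀ η > (0:ℝ), ∀ ε > (0:ℝ), dist x z ≤ 2 * (η + ε) := by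
    intro η hη ε hε
    set D := dist x z with hD
    have coord : ∀ i : I, |x i - z i| ≤ max (D - η) (2 * (η + ε)) := by
      intro i
      obtain ⟨δ, hδ0, hwit, hbnd⟩ := H i
      rcases le_or_gt δ η with hδη | hδη
      · -- small margin: use witnesses
        have upper : z i - x i ≤ 2 * (η + ε) := by
          obtain ⟨q, hq, hlt⟩ := (hwit ε hε).1
          set B := dist (dropCoord i x) (dropCoord i q) with hB
          have hB0 : 0 ≤ B := dist_nonneg
          have hzq : |z i - q i| ≤ dist x q :=
            le_trans (abs_coord_le_dist z q i) (hkey q hq)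
          have hxq : dist x q ≤ max |x i - q i| B := dist_le_max i x q
          have hzi : z i ≤ q i + max |x i - q i| B := by
            have := (abs_le.1 hzq).2
            linarith
          have hσ : q i + B < x i + η + ε := by linarith
          rcases le_or_gt (q i) (x i) with hcase | hcase
          · have habs : |x i - q i| = x i - q i := abs_of_nonneg (by linarith)
            have hmax : max |x i - q i| B ≤ x i + (η + ε) - q i := by
              refine max_le (by rw [habs]; linarith) (by linarith)
            linarith
          · have habs : |x i - q i| = q i - x i := by
              rw [abs_sub_comm]; exact abs_of_nonneg (by linarith)
            have h1 : q i - x i < η + ε := by linarith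
            have hmax : max |x i - q i| B ≤ η + ε := by
              refine max_le (by rw [habs]; linarith) (by linarith)
            linarith
        have lower : x i - z i ≤ 2 * (η + ε) := by
          obtain ⟨q, hq, hlt⟩ := (hwit ε hε).2
          set B := dist (dropCoord i x) (dropCoord i q) with hB
          have hB0 : 0 ≤ B := dist_nonneg
          have hzq : |z i - q i| ≤ dist x q :=
            le_trans (abs_coord_le_dist z q i) (hkey q hq)
          have hxq : dist x q ≤ max |x i - q i| B := dist_le_max i x q
          have hzi : q i - max |x i - q i| B ≤ z i := by
            have := (abs_le.1 hzq).1
            linarith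
          have hσ : x i - η - ε < q i - B := by linarith
          rcases le_or_gt (x i) (q i) with hcase | hcase
          · have habs : |x i - q i| = q i - x i := by
              rw [abs_sub_comm]; exact abs_of_nonneg (by linarith)
            have hmax : max |x i - q i| B ≤ q i - x i + (η + ε) := by
              refine max_le (by rw [habs]; linarith) (by linarith)
            linarith
          · have habs : |x i - q i| = x i - q i := abs_of_nonneg (by linarith)
            have h1 : x i - q i < η + ε := by linarith
            have hmax : max |x i - q i| B ≤ η + ε := by
              refine max_le (by rw [habs]; linarith) (by linarith)
            linarith
        have := abs_sub_comm (x i) (z i)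
        rw [abs_sub_le_iff]
        constructor
        · exact le_max_of_le_right lower
        · exact le_max_of_le_right upper
      · -- large margin: use bounds at q := z
        have hδpos : 0 < δ := hη.trans hδη
        obtain ⟨hlo, hhi⟩ := hbnd hδpos
        have h1 := hlo z hzQ
        have h2 := hhi z hzQ
        have hDD : dist (dropCoord i x) (dropCoord i z) ≤ D := dist_dropCoord_le i x z
        rw [abs_sub_le_iff]
        constructor
        · exact le_max_of_le_left (by linarith)
        · exact le_max_of_le_left (by linarith)
    have hmax0 : (0:ℝ) ≤ 2 * (η + ε) := by linarith
    have hDK : D ≤ max (D - η) (2 * (η + ε)) :=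
      dist_le_of_coords (le_max_of_le_right hmax0) coord
    rcases le_max_iff.1 hDK with h | h
    · linarith
    · exact h
  have hzero : dist x z ≤ 0 := by
    refine le_of_forall_pos_le_add ?_
    intro θ hθ
    have := main (θ/8) (by linarith) (θ/8) (by linarith)
    linarith
  have hxz : x = z := dist_le_zero.1 hzero
  rw [hxz]
  exact hzQ

end InjSub


namespace InjSub
variable {I : Type u}

open Classical in
noncomputable def rloF (Q : Set (lp (fun _ : I => ℝ) ⊤)) (i : I) :
    lp (fun _ : {j : I // j ≠ i} => ℝ) ⊤ → ℝ :=
  if i ∈ Udef Q then (fun y => min (rlo Q i y) ((rlo Q i y + rhi Q i y) / 2))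
  else fun y => rlo Q i y

open Classical in
noncomputable def rhiF (Q : Set (lp (fun _ : I => ℝ) ⊤)) (i : I) :
    lp (fun _ : {j : I // j ≠ i} => ℝ) ⊤ → ℝ :=
  if i ∈ Ldef Q then (fun y => max (rhi Q i y) ((rlo Q i y + rhi Q i y) / 2))
  else fun y => rhi Q i y

lemma lipschitz_avg {α : Type*} [PseudoMetricSpace α] {f g : α → ℝ}
    (hf : LipschitzWith 1 f) (hg : LipschitzWith 1 g) :
    LipschitzWith 1 (fun y => (f y + g y) / 2) := by
  refine LipschitzWith.of_dist_le_mul fun y y' => ?_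
  have h1 : dist (f y) (f y') ≤ 1 * dist y y' := hf.dist_le_mul y y'
  have h2 : dist (g y) (g y') ≤ 1 * dist y y' := hg.dist_le_mul y y'
  rw [NNReal.coe_one, one_mul]
  rw [one_mul] at h1 h2
  rw [Real.dist_eq] at h1 h2 ⊢
  rw [abs_le] at h1 h2 ⊢
  constructor <;> [skip; skip] <;> cases' h1 with h1a h1b <;> cases' h2 with h2a h2b <;> linarith

lemma lipschitz_min {α : Type*} [PseudoMetricSpace α] {f g : α → ℝ}
    (hf : LipschitzWith 1 f) (hg : LipschitzWith 1 g) :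
    LipschitzWith 1 (fun y => min (f y) (g y)) := by
  refine LipschitzWith.of_dist_le_mul fun y y' => ?_
  have h1 : dist (f y) (f y') ≤ 1 * dist y y' := hf.dist_le_mul y y'
  have h2 : dist (g y) (g y') ≤ 1 * dist y y' := hg.dist_le_mul y y'
  rw [NNReal.coe_one, one_mul]
  rw [one_mul] at h1 h2
  rw [Real.dist_eq] at h1 h2 ⊢
  calc |min (f y) (g y) - min (f y') (g y')| ≤ max |f y - f y'| |g y - g y'| :=
        abs_min_sub_min_le_max _ _ _ _
    _ ≤ dist y y' := max_le h1 h2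

lemma lipschitz_max {α : Type*} [PseudoMetricSpace α] {f g : α → ℝ}
    (hf : LipschitzWith 1 f) (hg : LipschitzWith 1 g) :
    LipschitzWith 1 (fun y => max (f y) (g y)) := by
  refine LipschitzWith.of_dist_le_mul fun y y' => ?_
  have h1 : dist (f y) (f y') ≤ 1 * dist y y' := hf.dist_le_mul y y'
  have h2 : dist (g y) (g y') ≤ 1 * dist y y' := hg.dist_le_mul y y'
  rw [NNReal.coe_one, one_mul]
  rw [one_mul] at h1 h2
  rw [Real.dist_eq] at h1 h2 ⊢
  calc |max (f y) (g y) - max (f y') (g y')| ≤ max |f y - f y'| |g y - g y'| :=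
        abs_max_sub_max_le_max _ _ _ _
    _ ≤ dist y y' := max_le h1 h2

end InjSub


/-- If `Q` is a non-empty subset of `l_∞(I)` that is injective with the induced metric,
then `Q` is cut out by a family of inequalities `r̲_i(π̂_i x) ≤ x_i ≤ r̄_i(π̂_i x)` given by
`1`-Lipschitz functions, where lower bounds are imposed for `i ∈ L` and upper bounds for
`i ∈ U`, and `r̲_i ≤ r̄_i` whenever both are imposed. -/
theorem exists_lipschitz_inequalities_of_injective {I : Type u}
    (Q : Set (lp (fun _ : I => ℝ) ⊤)) (hQ : Q.Nonempty)
    (hinj : IsInjectiveMetricSpace.{u, u, u} Q) :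
    ∃ (L U : Set I)
      (rlo rhi : (i : I) → (lp (fun _ : {j : I // j ≠ i} => ℝ) ⊤ → ℝ)),
      (∀ i ∈ L, LipschitzWith 1 (rlo i)) ∧
      (∀ i ∈ U, LipschitzWith 1 (rhi i)) ∧
      (∀ i ∈ L ∩ U, ∀ y, rlo i y ≤ rhi i y) ∧
      Q = {x | (∀ i ∈ L, rlo i (dropCoord i x) ≤ x i) ∧
               (∀ i ∈ U, x i ≤ rhi i (dropCoord i x))} := by
  classical
  obtain ⟨ρ, hρQ, hρd, hρid⟩ := InjSub.exists_retraction Q hinj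
  refine ⟨InjSub.Ldef Q, InjSub.Udef Q, InjSub.rloF Q, InjSub.rhiF Q, ?_, ?_, ?_, ?_⟩
  · -- Lipschitz lower
    intro i hi
    unfold InjSub.rloF
    split_ifs with hU
    · exact InjSub.lipschitz_min (InjSub.rlo_lipschitz hQ hi)
        (InjSub.lipschitz_avg (InjSub.rlo_lipschitz hQ hi) (InjSub.rhi_lipschitz hQ hU))
    · exact InjSub.rlo_lipschitz hQ hi
  · -- Lipschitz upper
    intro i hi
    unfold InjSub.rhiF
    split_ifs with hL
    · exact InjSub.lipschitz_max (InjSub.rhi_lipschitz hQ hi)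
        (InjSub.lipschitz_avg (InjSub.rlo_lipschitz hQ hL) (InjSub.rhi_lipschitz hQ hi))
    · exact InjSub.rhi_lipschitz hQ hi
  · -- order
    rintro i ⟨hL, hU⟩ y
    unfold InjSub.rloF InjSub.rhiF
    rw [if_pos hU, if_pos hL]
    exact le_trans (min_le_right _ _) (le_max_right _ _)
  · -- set equality
    ext x
    constructor
    · intro hx
      constructor
      · intro i hi
        have h0 : InjSub.rlo Q i (dropCoord i x) ≤ x i := by
          have := InjSub.rlo_le_add hQ hi (dropCoord i x) hx
          simpa using this
        unfold InjSub.rloF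
        split_ifs with hU
        · exact le_trans (min_le_left _ _) h0
        · exact h0
      · intro i hi
        have h0 : x i ≤ InjSub.rhi Q i (dropCoord i x) := by
          have := InjSub.sub_le_rhi hQ hi (dropCoord i x) hx
          simpa using this
        unfold InjSub.rhiF
        split_ifs with hL
        · exact le_trans h0 (le_max_left _ _)
        · exact h0
    · rintro ⟨hx1, hx2⟩
      refine InjSub.core ρ hρQ hρd x fun i => ?_
      set y := dropCoord i x with hy
      by_cases hL : i ∈ InjSub.Ldef Q <;> by_cases hU : i ∈ InjSub.Udef Q
      · -- both
        have c1 : min (InjSub.rlo Q i y) ((InjSub.rlo Q i y + InjSub.rhi Q i y) / 2) ≤ x i := by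
          have := hx1 i hL
          unfold InjSub.rloF at this
          rw [if_pos hU] at this
          exact this
        have c2 : x i ≤ max (InjSub.rhi Q i y) ((InjSub.rlo Q i y + InjSub.rhi Q i y) / 2) := by
          have := hx2 i hU
          unfold InjSub.rhiF at this
          rw [if_pos hL] at this
          exact this
        set a := InjSub.rlo Q i y with ha
        set b := InjSub.rhi Q i y with hb
        rcases le_or_gt a b with hab | hab
        · -- good region : δ = 0
          have hax : a ≤ x i := by
            have : min a ((a + b) / 2) = a := min_eq_left (by linarith)
            rwa [this] at c1
          have hxb : x i ≤ b := by
            have : max b ((a + b) / 2) = b := max_eq_left (by linarith)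
            rwa [this] at c2
          refine ⟨0, le_refl _, fun ε hε => ?_, fun h => absurd h (lt_irrefl _)⟩
          constructor
          · exact InjSub.lo_witness hQ hL (by rw [← ha]; linarith)
          · exact InjSub.hi_witness hQ hU (by rw [← hb]; linarith)
        · -- hole : pinned at midpoint
          have hmid : x i = (a + b) / 2 := by
            have e1 : min a ((a + b) / 2) = (a + b) / 2 := min_eq_right (by linarith)
            have e2 : max b ((a + b) / 2) = (a + b) / 2 := max_eq_right (by linarith)
            rw [e1] at c1; rw [e2] at c2
            linarith
          refine ⟨(a - b) / 2, by linarith, fun ε hε => ?_, fun _ => ?_⟩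
          · constructor
            · refine InjSub.lo_witness hQ hL (c := x i + (a - b) / 2 + ε) ?_
              rw [← ha]; rw [hmid]; linarith
            · refine InjSub.hi_witness hQ hU (c := x i - (a - b) / 2 - ε) ?_
              rw [← hb]; rw [hmid]; linarith
          · constructor
            · intro q hq
              have := InjSub.rlo_le_add hQ hL y hq
              rw [← ha] at this
              rw [hmid]
              linarith
            · intro q hq
              have := InjSub.sub_le_rhi hQ hU y hq
              rw [← hb] at this
              rw [hmid]
              linarith
      · -- L only
        have c1 : InjSub.rlo Q i y ≤ x i := by
          have := hx1 i hL
          unfold InjSub.rloF at this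
          rw [if_neg hU] at this
          exact this
        refine ⟨0, le_refl _, fun ε hε => ?_, fun h => absurd h (lt_irrefl _)⟩
        exact ⟨InjSub.lo_witness hQ hL (by linarith),
          InjSub.hi_witness_of_not_mem hU y (x i - 0 - ε)⟩
      · -- U only
        have c2 : x i ≤ InjSub.rhi Q i y := by
          have := hx2 i hU
          unfold InjSub.rhiF at this
          rw [if_neg hL] at this
          exact this
        refine ⟨0, le_refl _, fun ε hε => ?_, fun h => absurd h (lt_irrefl _)⟩
        exact ⟨InjSub.lo_witness_of_not_mem hL y (x i + 0 + ε),
          InjSub.hi_witness hQ hU (by linarith)⟩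
      · -- neither
        refine ⟨0, le_refl _, fun ε hε => ?_, fun h => absurd h (lt_irrefl _)⟩
        exact ⟨InjSub.lo_witness_of_not_mem hL y (x i + 0 + ε),
          InjSub.hi_witness_of_not_mem hU y (x i - 0 - ε)⟩
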